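/- Let m ≥ 1 be odd, let n ≥ 2 be even, and let ζ ∈ ℂ with ζ ≠ 0; set z = ζ^{2m}. Define the matrix K̂ ∈ M_{2mn}(ℂ), indexed by pairs (x,y) with x ∈ ℤ/2mℤ and y ∈ {1,…,n}, by K̂((x,y),(x',y')) = ζ·[x'=x+1][y'=y] + ζ⁻¹·[x'=x−1][y'=y] + i·[x'=x]·([y'=y+1] + [y'=y−1]), where [·] is 1 if the condition holds and 0 otherwise, and i is the imaginary unit. Then det K̂ = ∏_{k=1}^{n/2} ((z + α_k^{2m})·(z + α_k^{−2m}))² / z², where α_k = −cos(πk/(n+1)) + √(1 + cos²(πk/(n+1))). -/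

import Mathlib

open Complex Polynomial Matrix Finset Kronecker

namespace AnnulusKasteleynAux

lemma pow_eq_of_modEq {ω : ℂ} {N : ℕ} (hω : ω ^ N = 1) {a b : ℕ} (h : a ≡ b [MOD N]) :
    ω ^ a = ω ^ b := by
  have key : ∀ c : ℕ, ω ^ c = ω ^ (c % N) := by
    intro c
    conv_lhs => rw [← Nat.mod_add_div c N]
    rw [pow_add, pow_mul, hω, one_pow, mul_one]
  rw [key a, key b, h]

lemma fin_sum_ite {n : ℕ} (c : ℕ) (f : Fin n → ℂ) :
    ∑ y : Fin n, (if (y : ℕ) = c then f y else 0) = if h : c < n then f ⟨c, h⟩ else 0 := by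
  split_ifs with h
  · rw [Finset.sum_eq_single (⟨c, h⟩ : Fin n)]
    · simp
    · intro b _ hb
      exact if_neg fun hc => hb (Fin.ext hc)
    · simp
  · apply Finset.sum_eq_zero
    intro y _
    apply if_neg
    intro hy
    exact h (hy ▸ y.isLt)

lemma sin_rec (a b : ℝ) : Real.sin (a + b) + Real.sin (a - b) = 2 * Real.cos b * Real.sin a := by
  rw [Real.sin_add, Real.sin_sub]; ring

lemma alpha_pos (c : ℝ) : 0 < -c + Real.sqrt (1 + c ^ 2) := by
  nlinarith [Real.sqrt_nonneg (1 + c ^ 2), Real.sq_sqrt (show (0:ℝ) ≤ 1 + c ^ 2 by positivity)]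

lemma alpha_mul (c : ℝ) : (-c + Real.sqrt (1 + c ^ 2)) * (c + Real.sqrt (1 + c ^ 2)) = 1 := by
  have h := Real.sq_sqrt (show (0:ℝ) ≤ 1 + c ^ 2 by positivity)
  nlinarith [h]

lemma prod_over_roots {N : ℕ} [NeZero N] {ω : ℂ} (hprim : IsPrimitiveRoot ω N) (f : ℂ → ℂ) :
    ∏ j : ZMod N, f (ω ^ j.val) = ∏ x ∈ Polynomial.nthRootsFinset N (1 : ℂ), f x := by
  have hN0 : 0 < N := Nat.pos_of_ne_zero (NeZero.ne N)
  apply Finset.prod_nbij (fun j : ZMod N => ω ^ j.val)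
  · intro j _
    rw [Polynomial.mem_nthRootsFinset hN0, ← pow_mul, mul_comm, pow_mul, hprim.pow_eq_one, one_pow]
  · intro a _ b _ h
    exact ZMod.val_injective N (hprim.pow_inj a.val_lt b.val_lt h)
  · intro x hx
    obtain ⟨i, hi, hix⟩ := hprim.eq_pow_of_pow_eq_one ((Polynomial.mem_nthRootsFinset hN0 (1 : ℂ)).1 hx)
    refine ⟨(i : ZMod N), Finset.mem_coe.2 (Finset.mem_univ _), ?_⟩
    show ω ^ ((i : ZMod N)).val = x
    rw [ZMod.val_cast_of_lt hi, hix]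
  · intro j _; rfl

lemma prod_linear_roots {N : ℕ} [NeZero N] {ω : ℂ} (hprim : IsPrimitiveRoot ω N) (u : ℂ) :
    ∏ x ∈ Polynomial.nthRootsFinset N (1 : ℂ), (u - x) = u ^ N - 1 := by
  have hN0 : 0 < N := Nat.pos_of_ne_zero (NeZero.ne N)
  have h := congrArg (Polynomial.eval u) (Polynomial.X_pow_sub_one_eq_prod hN0 hprim)
  simpa [Polynomial.eval_prod] using h.symm

lemma prod_roots_eq_neg_one {N : ℕ} [NeZero N] {ω : ℂ} (hprim : IsPrimitiveRoot ω N)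
    (hNe : Even N) : ∏ x ∈ Polynomial.nthRootsFinset N (1 : ℂ), x = -1 := by
  have hN0 : 0 < N := Nat.pos_of_ne_zero (NeZero.ne N)
  have h := prod_linear_roots hprim 0
  rw [zero_pow hN0.ne'] at h
  have h2 : ∏ x ∈ Polynomial.nthRootsFinset N (1 : ℂ), (0 - x) =
      (-1) ^ (Polynomial.nthRootsFinset N (1 : ℂ)).card * ∏ x ∈ Polynomial.nthRootsFinset N (1 : ℂ), x := by
    rw [← Finset.prod_const, ← Finset.prod_mul_distrib]
    apply Finset.prod_congr rfl
    intros; ring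
  rw [h2, hprim.card_nthRootsFinset, hNe.neg_one_pow, one_mul] at h
  linear_combination h

lemma prod_zeta_linear {N : ℕ} [NeZero N] {ω : ℂ} (hprim : IsPrimitiveRoot ω N)
    (hNe : Even N) (ζ : ℂ) (hζ : ζ ≠ 0) (u : ℂ) :
    ∏ x ∈ Polynomial.nthRootsFinset N (1 : ℂ), (ζ * x - u) = u ^ N - ζ ^ N := by
  have hN0 : 0 < N := Nat.pos_of_ne_zero (NeZero.ne N)
  have h2 : ∀ x : ℂ, ζ * x - u = (-ζ) * (u / ζ - x) := by
    intro x; field_simp; ring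
  calc ∏ x ∈ Polynomial.nthRootsFinset N (1 : ℂ), (ζ * x - u)
      = ∏ x ∈ Polynomial.nthRootsFinset N (1 : ℂ), ((-ζ) * (u / ζ - x)) :=
        Finset.prod_congr rfl fun x _ => h2 x
    _ = (-ζ) ^ (Polynomial.nthRootsFinset N (1 : ℂ)).card *
        ∏ x ∈ Polynomial.nthRootsFinset N (1 : ℂ), (u / ζ - x) := by
        rw [← Finset.prod_const, ← Finset.prod_mul_distrib]
    _ = ζ ^ N * ((u / ζ) ^ N - 1) := by
        rw [hprim.card_nthRootsFinset, prod_linear_roots hprim, hNe.neg_pow]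
    _ = u ^ N - ζ ^ N := by
        rw [div_pow, mul_sub, mul_div_cancel₀ _ (pow_ne_zero _ hζ), mul_one]

lemma prod_circulant {N : ℕ} [NeZero N] {ω : ℂ} (hprim : IsPrimitiveRoot ω N)
    (hNe : Even N) (ζ : ℂ) (hζ : ζ ≠ 0) (u v : ℂ) (huv : u * v = 1) :
    ∏ j : ZMod N, (ζ * ω ^ j.val + ζ⁻¹ * (ω ^ j.val)⁻¹ + -(u + v)) =
      (-(ζ ^ N))⁻¹ * ((u ^ N - ζ ^ N) * (v ^ N - ζ ^ N)) := by
  rw [prod_over_roots hprim (fun x => ζ * x + ζ⁻¹ * x⁻¹ + -(u + v))]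
  have hfact : ∀ x ∈ Polynomial.nthRootsFinset N (1 : ℂ),
      ζ * x + ζ⁻¹ * x⁻¹ + -(u + v) = (ζ * x)⁻¹ * ((ζ * x - u) * (ζ * x - v)) := by
    intro x hx
    have hx0 : x ≠ 0 := Polynomial.ne_zero_of_mem_nthRootsFinset one_ne_zero hx
    field_simp
    linear_combination -huv
  rw [Finset.prod_congr rfl hfact, Finset.prod_mul_distrib, Finset.prod_mul_distrib,
    Finset.prod_inv_distrib, prod_zeta_linear hprim hNe ζ hζ u, prod_zeta_linear hprim hNe ζ hζ v]
  have hzx : ∏ x ∈ Polynomial.nthRootsFinset N (1 : ℂ), (ζ * x) = -(ζ ^ N) := by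
    rw [Finset.prod_mul_distrib, Finset.prod_const, hprim.card_nthRootsFinset,
      prod_roots_eq_neg_one hprim hNe]
    ring
  rw [hzx]

lemma term_eval (m : ℕ) [NeZero (2 * m)] (hmodd : Odd m) (ω ζ : ℂ) (hζ : ζ ≠ 0)
    (hprim : IsPrimitiveRoot ω (2 * m)) (c : ℝ) :
    ∏ j : ZMod (2 * m), (ζ * ω ^ j.val + ζ⁻¹ * (ω ^ j.val)⁻¹ + 2 * Complex.I * (c : ℂ)) =
    -((ζ ^ (2 * m) + ((-c + Real.sqrt (1 + c ^ 2) : ℝ) : ℂ) ^ (2 * m)) *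
      (ζ ^ (2 * m) + ((((-c + Real.sqrt (1 + c ^ 2) : ℝ) : ℂ)) ^ (2 * m))⁻¹)) / ζ ^ (2 * m) := by
  have hNe : Even (2 * m) := ⟨m, by ring⟩
  set a : ℝ := -c + Real.sqrt (1 + c ^ 2) with hadef
  set b : ℝ := c + Real.sqrt (1 + c ^ 2) with hbdef
  have hab : a * b = 1 := alpha_mul c
  have habC : ((a : ℝ) : ℂ) * ((b : ℝ) : ℂ) = 1 := by exact_mod_cast congrArg Complex.ofReal hab
  set u : ℂ := Complex.I * (a : ℂ) with hudef
  set v : ℂ := -Complex.I * (b : ℂ) with hvdef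
  have huv : u * v = 1 := by
    rw [hudef, hvdef]
    linear_combination habC + (-((a:ℂ) * (b:ℂ))) * Complex.I_mul_I
  have hba : ((b : ℝ) : ℂ) - ((a : ℝ) : ℂ) = 2 * (c : ℂ) := by
    rw [hadef, hbdef]; push_cast; ring
  have hc2 : (2 : ℂ) * Complex.I * (c : ℂ) = -(u + v) := by
    rw [hudef, hvdef]
    linear_combination (-Complex.I) * hba
  simp only [hc2]
  rw [prod_circulant hprim hNe ζ hζ u v huv]
  have hIpow : Complex.I ^ (2 * m) = -1 := by
    rw [pow_mul, Complex.I_sq]; exact Odd.neg_one_pow hmodd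
  have hIpow' : (-Complex.I) ^ (2 * m) = -1 := by
    rw [pow_mul, neg_sq, Complex.I_sq]; exact Odd.neg_one_pow hmodd
  have hu2m : u ^ (2 * m) = -(((a : ℝ) : ℂ) ^ (2 * m)) := by
    rw [hudef, mul_pow, hIpow]; ring
  have hbinv : ((b : ℝ) : ℂ) = (((a : ℝ) : ℂ))⁻¹ := (inv_eq_of_mul_eq_one_right habC).symm
  have hv2m : v ^ (2 * m) = -((((a : ℝ) : ℂ)) ^ (2 * m))⁻¹ := by
    rw [hvdef, mul_pow, hIpow', hbinv, inv_pow]; ring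
  rw [hu2m, hv2m]
  have hz0 : (ζ : ℂ) ^ (2 * m) ≠ 0 := pow_ne_zero _ hζ
  field_simp
  ring

end AnnulusKasteleynAux

open AnnulusKasteleynAux in
/-- Proposition 6.1 in sign-unambiguous form: the determinant of the big Kasteleyn matrix
`K̂` of the `2m × n` square-grid graph on an annulus (with `m` odd, `n ≥ 2` even,
Kasteleyn sign `i` on vertical edges, parallel transport `ζ` on eastward horizontal
edges, `z = ζ^{2m}`) equals `∏_{k=1}^{n/2} ((z + α_k^{2m})(z + α_k^{−2m}))²/z²`, where
`α_k = −cos(πk/(n+1)) + √(1 + cos²(πk/(n+1)))`. -/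
theorem annulus_kasteleyn_determinant (m n : ℕ) (hmodd : Odd m) (hm : 1 ≤ m)
    (hneven : Even n) (hn : 2 ≤ n) [NeZero (2 * m)] (ζ : ℂ) (hζ : ζ ≠ 0) :
    let Khat : Matrix (ZMod (2 * m) × Fin n) (ZMod (2 * m) × Fin n) ℂ :=
      Matrix.of fun p q =>
        (if q.1 = p.1 + 1 ∧ q.2 = p.2 then ζ else 0) +
        (if q.1 = p.1 - 1 ∧ q.2 = p.2 then ζ⁻¹ else 0) +
        (if q.1 = p.1 then
          Complex.I * ((if (q.2 : ℕ) = (p.2 : ℕ) + 1 then 1 else 0) +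
            (if (p.2 : ℕ) = (q.2 : ℕ) + 1 then 1 else 0))
        else 0)
    let z : ℂ := ζ ^ (2 * m)
    let α : ℕ → ℝ := fun k =>
      -Real.cos (Real.pi * k / (n + 1)) + Real.sqrt (1 + Real.cos (Real.pi * k / (n + 1)) ^ 2)
    Khat.det = ∏ k ∈ Finset.Icc 1 (n / 2),
      ((z + ((α k : ℂ)) ^ (2 * m)) * (z + (((α k : ℂ)) ^ (2 * m))⁻¹)) ^ 2 / z ^ 2 := by
  intro Khat z α
  haveI : Fact (1 < 2 * m) := ⟨by omega⟩
  have hKdef : Khat = Matrix.of fun p q : ZMod (2 * m) × Fin n =>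
      (if q.1 = p.1 + 1 ∧ q.2 = p.2 then ζ else 0) +
      (if q.1 = p.1 - 1 ∧ q.2 = p.2 then ζ⁻¹ else 0) +
      (if q.1 = p.1 then
        Complex.I * ((if (q.2 : ℕ) = (p.2 : ℕ) + 1 then 1 else 0) +
          (if (p.2 : ℕ) = (q.2 : ℕ) + 1 then 1 else 0))
      else 0) := rfl
  have hα : ∀ kk : ℕ, α kk = -Real.cos (Real.pi * kk / (n + 1)) +
      Real.sqrt (1 + Real.cos (Real.pi * kk / (n + 1)) ^ 2) := fun _ => rfl
  have hz : z = ζ ^ (2 * m) := rfl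
  have hN0 : 0 < 2 * m := by omega
  have hNe : Even (2 * m) := ⟨m, by ring⟩
  have hz0 : z ≠ 0 := pow_ne_zero _ hζ
  set ω : ℂ := Complex.exp (2 * ↑Real.pi * Complex.I / ((2 * m : ℕ) : ℂ)) with hωdef
  have hprim : IsPrimitiveRoot ω (2 * m) := Complex.isPrimitiveRoot_exp _ (NeZero.ne _)
  have hω1 : ω ^ (2 * m) = 1 := hprim.pow_eq_one
  have hωne : ω ≠ 0 := by rw [hωdef]; exact Complex.exp_ne_zero _
  set C : Matrix (ZMod (2 * m)) (ZMod (2 * m)) ℂ :=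
    Matrix.of (fun x x' => (if x' = x + 1 then ζ else 0) + (if x' = x - 1 then ζ⁻¹ else 0))
    with hCdef
  set Mv : Matrix (Fin n) (Fin n) ℂ :=
    Matrix.of (fun y y' : Fin n => Complex.I * ((if (y' : ℕ) = (y : ℕ) + 1 then (1:ℂ) else 0) +
      (if (y : ℕ) = (y' : ℕ) + 1 then 1 else 0))) with hMdef
  set F : Matrix (ZMod (2 * m)) (ZMod (2 * m)) ℂ :=
    Matrix.of (fun x j : ZMod (2 * m) => ω ^ (x.val * j.val)) with hFdef
  set S : Matrix (Fin n) (Fin n) ℂ :=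
    Matrix.of (fun y k : Fin n =>
      ((Real.sin (Real.pi * ((k : ℕ) + 1) * ((y : ℕ) + 1) / (n + 1)) : ℝ) : ℂ)) with hSdef
  set lamC : ZMod (2 * m) → ℂ := fun j => ζ * ω ^ j.val + ζ⁻¹ * (ω ^ j.val)⁻¹ with hlamC
  set lamM : Fin n → ℂ :=
    fun k => 2 * Complex.I * ((Real.cos (Real.pi * ((k : ℕ) + 1) / (n + 1)) : ℝ) : ℂ) with hlamM
  -- Step 1: Khat is a Kronecker sum
  have hKhat : Khat = C ⊗ₖ (1 : Matrix (Fin n) (Fin n) ℂ) +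
      (1 : Matrix (ZMod (2 * m)) (ZMod (2 * m)) ℂ) ⊗ₖ Mv := by
    rw [hKdef, hCdef, hMdef]
    apply Matrix.ext
    rintro ⟨x, y⟩ ⟨x', y'⟩
    simp only [Matrix.of_apply, Matrix.add_apply, Matrix.kroneckerMap_apply, Matrix.one_apply]
    have hne : ∀ t : ℕ, ¬ (t = t + 1) := fun t => by omega
    by_cases hy : y' = y
    · obtain rfl := hy
      simp [hne]
    · have hy' : ¬ (y = y') := fun h => hy h.symm
      simp only [hy, hy', and_false, if_false, mul_zero, zero_add, add_zero, zero_mul]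
      by_cases hx : x' = x
      · obtain rfl := hx
        simp
      · have hx' : ¬ (x = x') := fun h => hx h.symm
        simp [hx, hx']
  -- Step 2: Fourier diagonalization of the circulant part
  have hCF : C * F = F * Matrix.diagonal lamC := by
    apply Matrix.ext
    intro x j
    rw [Matrix.mul_apply, Matrix.mul_diagonal]
    have expand : ∀ x' : ZMod (2 * m),
        C x x' * F x' j =
        (if x' = x + 1 then ζ * ω ^ (x'.val * j.val) else 0) +
        (if x' = x - 1 then ζ⁻¹ * ω ^ (x'.val * j.val) else 0) := by
      intro x'
      rw [hCdef, hFdef]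
      simp only [Matrix.of_apply]
      split_ifs <;> ring
    rw [Finset.sum_congr rfl (fun x' _ => expand x'), Finset.sum_add_distrib,
      Finset.sum_ite_eq' Finset.univ (x + 1) (fun x' => ζ * ω ^ (x'.val * j.val)),
      Finset.sum_ite_eq' Finset.univ (x - 1) (fun x' => ζ⁻¹ * ω ^ (x'.val * j.val))]
    simp only [Finset.mem_univ, if_true]
    have hval1 : (x + 1).val * j.val ≡ x.val * j.val + j.val [MOD 2 * m] := by
      have h1 : (x + 1).val ≡ x.val + 1 [MOD 2 * m] := by
        rw [ZMod.val_add, ZMod.val_one]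
        exact Nat.mod_modEq _ _
      calc (x + 1).val * j.val ≡ (x.val + 1) * j.val [MOD 2 * m] := h1.mul_right _
        _ = x.val * j.val + j.val := by ring
    have hF1 : ω ^ ((x + 1).val * j.val) = ω ^ (x.val * j.val) * ω ^ j.val := by
      rw [pow_eq_of_modEq hω1 hval1, pow_add]
    have hval2 : (x - 1).val * j.val + j.val ≡ x.val * j.val [MOD 2 * m] := by
      have h1 : (x - 1).val + 1 ≡ x.val [MOD 2 * m] := by
        have h2 : ((x - 1) + 1).val = ((x - 1).val + (1 : ZMod (2 * m)).val) % (2 * m) :=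
          ZMod.val_add _ _
        rw [sub_add_cancel, ZMod.val_one] at h2
        rw [h2]
        exact (Nat.mod_modEq _ _).symm
      calc (x - 1).val * j.val + j.val = ((x - 1).val + 1) * j.val := by ring
        _ ≡ x.val * j.val [MOD 2 * m] := h1.mul_right _
    have hF2 : ω ^ ((x - 1).val * j.val) * ω ^ j.val = ω ^ (x.val * j.val) := by
      rw [← pow_add, pow_eq_of_modEq hω1 hval2]
    have hωj : (ω : ℂ) ^ j.val ≠ 0 := pow_ne_zero _ hωne
    have hF2' : ω ^ ((x - 1).val * j.val) = ω ^ (x.val * j.val) * (ω ^ j.val)⁻¹ := by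
      rw [← hF2]; field_simp
    rw [hF1, hF2', hFdef, hlamC]
    simp only [Matrix.of_apply]
    field_simp
  -- Step 3: sine diagonalization of the path part
  have hMS : Mv * S = S * Matrix.diagonal lamM := by
    apply Matrix.ext
    intro y k
    rw [Matrix.mul_apply, Matrix.mul_diagonal, hMdef, hSdef, hlamM]
    simp only [Matrix.of_apply]
    set sn : ℕ → ℝ := fun t => Real.sin (Real.pi * ((k : ℕ) + 1) * t / (n + 1)) with hsn
    have hn1 : ((n : ℝ) + 1) ≠ 0 := by positivity
    have hS : ∀ y' : Fin n, ((Real.sin (Real.pi * ((k : ℕ) + 1) * ((y' : ℕ) + 1) / (n + 1)) : ℝ) : ℂ)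
        = ((sn ((y' : ℕ) + 1) : ℝ) : ℂ) := by
      intro y'; rw [hsn]; norm_num
    have expand : ∀ y' : Fin n,
        Complex.I * ((if (y' : ℕ) = (y : ℕ) + 1 then (1:ℂ) else 0) +
          (if (y : ℕ) = (y' : ℕ) + 1 then 1 else 0)) *
          ((Real.sin (Real.pi * ((k : ℕ) + 1) * ((y' : ℕ) + 1) / (n + 1)) : ℝ) : ℂ) =
        Complex.I * (if (y' : ℕ) = (y : ℕ) + 1 then ((sn ((y' : ℕ) + 1) : ℝ) : ℂ) else 0) +
        Complex.I * (if (y' : ℕ) = (y : ℕ) - 1 ∧ 1 ≤ (y : ℕ)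
          then ((sn ((y' : ℕ) + 1) : ℝ) : ℂ) else 0) := by
      intro y'
      rw [hS y']
      have hiff : ((y : ℕ) = (y' : ℕ) + 1) ↔ ((y' : ℕ) = (y : ℕ) - 1 ∧ 1 ≤ (y : ℕ)) := by omega
      rw [if_congr hiff rfl rfl]
      split_ifs <;> ring
    rw [Finset.sum_congr rfl (fun y' _ => expand y'), Finset.sum_add_distrib,
      ← Finset.mul_sum, ← Finset.mul_sum]
    have hT1 : ∑ x : Fin n, (if (x : ℕ) = (y : ℕ) + 1 then ((sn ((x : ℕ) + 1) : ℝ) : ℂ) else 0) =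
        ((sn ((y : ℕ) + 2) : ℝ) : ℂ) := by
      rw [fin_sum_ite ((y : ℕ) + 1) (fun x => ((sn ((x : ℕ) + 1) : ℝ) : ℂ))]
      split_ifs with h
      · norm_num
      · have hyv : (y : ℕ) + 2 = n + 1 := by have := y.isLt; omega
        rw [hyv]
        have hzero : sn (n + 1) = 0 := by
          have harg : Real.pi * ((k : ℕ) + 1) * ((n + 1 : ℕ) : ℝ) / (n + 1) =
              (((k : ℕ) + 1 : ℕ) : ℝ) * Real.pi := by push_cast; field_simp
          rw [hsn]
          simp only
          rw [harg, Real.sin_nat_mul_pi]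
        rw [hzero]
        norm_num
    have hT2 : ∑ x : Fin n, (if (x : ℕ) = (y : ℕ) - 1 ∧ 1 ≤ (y : ℕ)
          then ((sn ((x : ℕ) + 1) : ℝ) : ℂ) else 0) = ((sn (y : ℕ) : ℝ) : ℂ) := by
      by_cases hy0 : 1 ≤ (y : ℕ)
      · have hcongr : ∀ x : Fin n, (if (x : ℕ) = (y : ℕ) - 1 ∧ 1 ≤ (y : ℕ)
            then ((sn ((x : ℕ) + 1) : ℝ) : ℂ) else 0) =
            (if (x : ℕ) = (y : ℕ) - 1 then ((sn ((x : ℕ) + 1) : ℝ) : ℂ) else 0) :=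
          fun x => if_congr (and_iff_left hy0) rfl rfl
        rw [Finset.sum_congr rfl (fun x _ => hcongr x),
          fin_sum_ite ((y : ℕ) - 1) (fun x => ((sn ((x : ℕ) + 1) : ℝ) : ℂ))]
        rw [dif_pos (show (y : ℕ) - 1 < n by have := y.isLt; omega)]
        have : (y : ℕ) - 1 + 1 = (y : ℕ) := by omega
        norm_num [this]
      · have hy0' : (y : ℕ) = 0 := by omega
        rw [Finset.sum_eq_zero (fun x _ => if_neg (fun hc => hy0 hc.2))]
        rw [hy0']
        have : sn 0 = 0 := by rw [hsn]; simp
        rw [this]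
        norm_num
    rw [hT1, hT2, hS y]
    have hrec : sn ((y : ℕ) + 2) + sn (y : ℕ) =
        2 * Real.cos (Real.pi * ((k : ℕ) + 1) / (n + 1)) * sn ((y : ℕ) + 1) := by
      rw [hsn]
      simp only
      have e1 : Real.pi * ((k : ℕ) + 1) * (((y : ℕ) + 2 : ℕ) : ℝ) / (n + 1) =
          Real.pi * ((k : ℕ) + 1) * (((y : ℕ) + 1 : ℕ) : ℝ) / (n + 1) +
            Real.pi * ((k : ℕ) + 1) / (n + 1) := by push_cast; field_simp; ring
      have e2 : Real.pi * ((k : ℕ) + 1) * (((y : ℕ) : ℕ) : ℝ) / (n + 1) =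
          Real.pi * ((k : ℕ) + 1) * (((y : ℕ) + 1 : ℕ) : ℝ) / (n + 1) -
            Real.pi * ((k : ℕ) + 1) / (n + 1) := by push_cast; field_simp; ring
      rw [e1, e2, sin_rec]
    have hrecC := congrArg (fun r : ℝ => (r : ℂ)) hrec
    push_cast at hrecC
    push_cast
    linear_combination Complex.I * hrecC
  -- Step 4: conjugation equation for the full matrix
  have hKP : Khat * (F ⊗ₖ S) = (F ⊗ₖ S) *
      Matrix.diagonal (fun p : ZMod (2 * m) × Fin n => lamC p.1 + lamM p.2) := by
    have e1 : (C ⊗ₖ (1 : Matrix (Fin n) (Fin n) ℂ)) * (F ⊗ₖ S) =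
        (F ⊗ₖ S) * ((Matrix.diagonal lamC) ⊗ₖ (1 : Matrix (Fin n) (Fin n) ℂ)) := by
      rw [← Matrix.mul_kronecker_mul, hCF, Matrix.one_mul,
        ← Matrix.mul_kronecker_mul, Matrix.mul_one]
    have e2 : ((1 : Matrix (ZMod (2 * m)) (ZMod (2 * m)) ℂ) ⊗ₖ Mv) * (F ⊗ₖ S) =
        (F ⊗ₖ S) * ((1 : Matrix (ZMod (2 * m)) (ZMod (2 * m)) ℂ) ⊗ₖ Matrix.diagonal lamM) := by
      rw [← Matrix.mul_kronecker_mul, hMS, Matrix.one_mul,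
        ← Matrix.mul_kronecker_mul, Matrix.mul_one]
    have e3 : (Matrix.diagonal lamC) ⊗ₖ (1 : Matrix (Fin n) (Fin n) ℂ) +
        (1 : Matrix (ZMod (2 * m)) (ZMod (2 * m)) ℂ) ⊗ₖ Matrix.diagonal lamM =
        Matrix.diagonal (fun p : ZMod (2 * m) × Fin n => lamC p.1 + lamM p.2) := by
      rw [← Matrix.diagonal_one, Matrix.diagonal_kronecker_diagonal, ← Matrix.diagonal_one,
        Matrix.diagonal_kronecker_diagonal, Matrix.diagonal_add]
      funext p
      simp
    rw [hKhat, Matrix.add_mul, e1, e2, ← Matrix.mul_add, e3]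
  -- Step 5: the conjugating matrix has nonzero determinant
  have hdetF : F.det ≠ 0 := by
    set e : Fin (2 * m) ≃ ZMod (2 * m) :=
      { toFun := fun i => (i : ℕ),
        invFun := fun x => ⟨x.val, ZMod.val_lt x⟩,
        left_inv := fun i => Fin.ext (ZMod.val_cast_of_lt i.isLt),
        right_inv := fun x => ZMod.natCast_rightInverse x } with hedef
    rw [← Matrix.det_submatrix_equiv_self e F]
    have hsub : F.submatrix e e = Matrix.vandermonde (fun i : Fin (2 * m) => ω ^ (i : ℕ)) := by
      apply Matrix.ext
      intro i j
      have he : ∀ i : Fin (2 * m), e i = ((i : ℕ) : ZMod (2 * m)) := fun _ => rfl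
      rw [Matrix.submatrix_apply, he, he, hFdef, Matrix.of_apply, Matrix.vandermonde_apply,
        ZMod.val_cast_of_lt i.isLt, ZMod.val_cast_of_lt j.isLt, pow_mul]
    rw [hsub, Matrix.det_vandermonde]
    apply Finset.prod_ne_zero_iff.2
    intro i _
    apply Finset.prod_ne_zero_iff.2
    intro j hj
    have hij : i < j := Finset.mem_Ioi.1 hj
    intro hzero
    have heq : ω ^ (j : ℕ) = ω ^ (i : ℕ) := by linear_combination hzero
    have := hprim.pow_inj j.isLt i.isLt heq
    omega
  have hdetS : S.det ≠ 0 := by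
    have hpi := Real.pi_pos
    have hinj : Function.Injective lamM := by
      intro k k' h
      rw [hlamM] at h
      simp only at h
      have h2 : ((Real.cos (Real.pi * ((k : ℕ) + 1) / (n + 1)) : ℝ) : ℂ) =
          ((Real.cos (Real.pi * ((k' : ℕ) + 1) / (n + 1)) : ℝ) : ℂ) := by
        have h2I : (2 * Complex.I) ≠ 0 := by simp [Complex.I_ne_zero]
        exact mul_left_cancel₀ h2I h
      have h3 : Real.cos (Real.pi * ((k : ℕ) + 1) / (n + 1)) =
          Real.cos (Real.pi * ((k' : ℕ) + 1) / (n + 1)) := by exact_mod_cast h2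
      have hmem : ∀ k0 : Fin n, Real.pi * ((k0 : ℕ) + 1) / (n + 1) ∈ Set.Icc 0 Real.pi := by
        intro k0
        constructor
        · positivity
        · rw [div_le_iff₀ (by positivity)]
          have : ((k0 : ℕ) : ℝ) + 1 ≤ n := by
            have := k0.isLt
            exact_mod_cast Nat.succ_le_of_lt this
          nlinarith
      have h4 := Real.injOn_cos (hmem k) (hmem k') h3
      field_simp at h4
      exact Fin.ext (by exact_mod_cast (by linarith : ((k : ℕ) : ℝ) = ((k' : ℕ) : ℝ)))
    have hvec : ∀ k : Fin n, Module.End.HasEigenvector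
        (Matrix.mulVecLin Mv : Module.End ℂ (Fin n → ℂ)) (lamM k) (Sᵀ k) := by
      intro k
      constructor
      · rw [Module.End.mem_eigenspace_iff]
        funext y
        have h1 : Matrix.mulVecLin Mv (Sᵀ k) y = (Mv * S) y k := by
          rw [Matrix.mulVecLin_apply, Matrix.mul_apply]
          rfl
        rw [h1, hMS, Matrix.mul_diagonal]
        show S y k * lamM k = lamM k * S y k
        ring
      · intro h0
        have h1 := congrFun h0 ⟨0, by omega⟩
        rw [hSdef] at h1
        simp only [Matrix.transpose_apply, Matrix.of_apply, Pi.zero_apply] at h1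
        have h2 : Real.sin (Real.pi * ((k : ℕ) + 1) * ((0 : ℕ) + 1) / (n + 1)) = 0 := by
          exact_mod_cast h1
        have h3 : 0 < Real.sin (Real.pi * ((k : ℕ) + 1) * ((0 : ℕ) + 1) / (n + 1)) := by
          apply Real.sin_pos_of_pos_of_lt_pi
          · positivity
          · rw [div_lt_iff₀ (by positivity)]
            have : ((k : ℕ) : ℝ) + 1 ≤ n := by
              have := k.isLt
              exact_mod_cast Nat.succ_le_of_lt this
            push_cast
            nlinarith
        linarith
    have hli : LinearIndependent ℂ (fun k : Fin n => Sᵀ k) :=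
      Module.End.eigenvectors_linearIndependent' (Matrix.mulVecLin Mv : Module.End ℂ (Fin n → ℂ))
        lamM hinj _ hvec
    have hunit : IsUnit S := Matrix.linearIndependent_cols_iff_isUnit.mp hli
    exact ((Matrix.isUnit_iff_isUnit_det S).mp hunit).ne_zero
  have hdetP : (F ⊗ₖ S).det ≠ 0 := by
    rw [Matrix.det_kronecker]
    exact mul_ne_zero (pow_ne_zero _ hdetF) (pow_ne_zero _ hdetS)
  -- Step 6: the determinant is the product of eigenvalues
  have hdet : Khat.det = ∏ p : ZMod (2 * m) × Fin n, (lamC p.1 + lamM p.2) := by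
    have h := congrArg Matrix.det hKP
    rw [Matrix.det_mul, Matrix.det_mul, Matrix.det_diagonal, mul_comm] at h
    exact mul_left_cancel₀ hdetP h
  -- Step 7: evaluate the inner product over j for each k
  have hterm : ∀ k : Fin n, ∏ j : ZMod (2 * m), (lamC j + lamM k) =
      -((z + ((α ((k : ℕ) + 1) : ℝ) : ℂ) ^ (2 * m)) *
        (z + (((α ((k : ℕ) + 1) : ℝ) : ℂ) ^ (2 * m))⁻¹)) / z := by
    intro k
    have hc := term_eval m hmodd ω ζ hζ hprim (Real.cos (Real.pi * (((k : ℕ) : ℝ) + 1) / (n + 1)))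
    simp only [hlamC, hlamM]
    rw [hc]
    have hαk : (α ((k : ℕ) + 1) : ℝ) =
        -Real.cos (Real.pi * (((k : ℕ) : ℝ) + 1) / (n + 1)) +
          Real.sqrt (1 + Real.cos (Real.pi * (((k : ℕ) : ℝ) + 1) / (n + 1)) ^ 2) := by
      rw [hα]
      push_cast
      ring_nf
    rw [hαk, hz]
  -- Step 8: reindex and pair up k with n+1-k
  have hpairα : ∀ kk : ℕ, 1 ≤ kk → kk ≤ n → α (n + 1 - kk) = (α kk)⁻¹ := by
    intro kk h1 h2
    set c : ℝ := Real.cos (Real.pi * kk / (n + 1)) with hcdef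
    have hcast : ((n + 1 - kk : ℕ) : ℝ) = (n : ℝ) + 1 - kk := by
      have : kk ≤ n + 1 := by omega
      push_cast [this]
      ring
    have harg : Real.pi * ((n + 1 - kk : ℕ) : ℝ) / (n + 1) =
        Real.pi - Real.pi * kk / (n + 1) := by
      rw [hcast]
      have hn1 : ((n : ℝ) + 1) ≠ 0 := by positivity
      field_simp
    have hcos : Real.cos (Real.pi * ((n + 1 - kk : ℕ) : ℝ) / (n + 1)) = -c := by
      rw [harg, Real.cos_pi_sub, hcdef]
    have hinv : (α kk)⁻¹ = c + Real.sqrt (1 + c ^ 2) := by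
      rw [hα kk, ← hcdef]
      exact inv_eq_of_mul_eq_one_right (alpha_mul c)
    rw [hα (n + 1 - kk), hcos, hinv]
    ring_nf
  have hpair : ∀ kk : ℕ, 1 ≤ kk → kk ≤ n →
      (z + ((α (n + 1 - kk) : ℝ) : ℂ) ^ (2 * m)) *
        (z + (((α (n + 1 - kk) : ℝ) : ℂ) ^ (2 * m))⁻¹) =
      (z + ((α kk : ℝ) : ℂ) ^ (2 * m)) * (z + (((α kk : ℝ) : ℂ) ^ (2 * m))⁻¹) := by
    intro kk h1 h2
    rw [hpairα kk h1 h2]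
    push_cast
    rw [inv_pow, inv_inv]
    ring
  -- Assemble
  rw [hdet, Fintype.prod_prod_type]
  rw [Finset.prod_comm]
  rw [Finset.prod_congr rfl (fun k _ => hterm k)]
  -- reindex Fin n → Icc 1 n
  have hreindex : ∏ k : Fin n,
      -((z + ((α ((k : ℕ) + 1) : ℝ) : ℂ) ^ (2 * m)) *
        (z + (((α ((k : ℕ) + 1) : ℝ) : ℂ) ^ (2 * m))⁻¹)) / z =
      ∏ kk ∈ Finset.Icc 1 n,
      -((z + ((α kk : ℝ) : ℂ) ^ (2 * m)) * (z + (((α kk : ℝ) : ℂ) ^ (2 * m))⁻¹)) / z := by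
    apply Finset.prod_nbij (fun k : Fin n => (k : ℕ) + 1)
    · intro k _
      simp only [Finset.mem_Icc]
      have := k.isLt
      omega
    · intro k1 _ k2 _ h
      have h' : (k1 : ℕ) + 1 = (k2 : ℕ) + 1 := h
      exact Fin.ext (by omega)
    · intro kk hkk
      simp only [Finset.coe_Icc, Set.mem_Icc] at hkk
      exact ⟨⟨kk - 1, by omega⟩, Finset.mem_coe.2 (Finset.mem_univ _), by
        show (kk - 1) + 1 = kk; omega⟩
    · intro k _
      rfl
  rw [hreindex]
  have hIcc : Finset.Icc 1 n = Finset.Ioc 0 n := by rw [← Finset.Icc_add_one_left_eq_Ioc, zero_add]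
  have hIcc2 : Finset.Icc 1 (n / 2) = Finset.Ioc 0 (n / 2) := by rw [← Finset.Icc_add_one_left_eq_Ioc, zero_add]
  rw [hIcc, ← Finset.prod_Ioc_consecutive _ (Nat.zero_le (n / 2)) (by omega : n / 2 ≤ n)]
  have h2 : ∏ kk ∈ Finset.Ioc (n / 2) n,
      -((z + ((α kk : ℝ) : ℂ) ^ (2 * m)) * (z + (((α kk : ℝ) : ℂ) ^ (2 * m))⁻¹)) / z =
      ∏ kk ∈ Finset.Ioc 0 (n / 2),
      -((z + ((α kk : ℝ) : ℂ) ^ (2 * m)) * (z + (((α kk : ℝ) : ℂ) ^ (2 * m))⁻¹)) / z := by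
    apply Finset.prod_nbij' (fun kk => n + 1 - kk) (fun kk => n + 1 - kk)
    · intro kk hkk
      simp only [Finset.mem_Ioc] at hkk ⊢
      obtain ⟨n2, hn2⟩ := hneven
      omega
    · intro kk hkk
      simp only [Finset.mem_Ioc] at hkk ⊢
      obtain ⟨n2, hn2⟩ := hneven
      omega
    · intro kk hkk
      simp only [Finset.mem_Ioc] at hkk
      omega
    · intro kk hkk
      simp only [Finset.mem_Ioc] at hkk
      omega
    · intro kk hkk
      simp only [Finset.mem_Ioc] at hkk
      rw [hpair kk (by omega) (by omega)]
  rw [h2, ← Finset.prod_mul_distrib, hIcc2]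
  apply Finset.prod_congr rfl
  intro kk _
  field_simp
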